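/- arXiv:2008.01465 — 3 statements merged into one kernel-verified Lean document; each statement's English description precedes it below -/
import Mathlib

section
/- Fix d ≥ 1 and consider the condition-length function lc on tuples of control points P = (P₀,…,P_d) ∈ (ℝ²)^{d+1}, defined by lc(P) = ∫₀¹ ‖∂ₜB(P,t)‖ / √|B₁(P,t)² − 4B₂(P,t)| dt, where B(P,t) = Σᵢ₌₀^d C(d,i)(1−t)^{d−i}tⁱ Pᵢ = (B₁(P,t), B₂(P,t)). Then lc is differentiable (as a function of the coordinates of P₀,…,P_d) at every point P such that for all t ∈ [0,1] one has ∂ₜB(P,t) ≠ 0 and B₁(P,t)² ≠ 4B₂(P,t). -/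
open Metric Set


/-- The degree-`d` Bézier curve in the space `ℝ²` of monic real quadratics
(identified via `x² + bx + c ↦ (b,c)`), with control points `P₀, …, P_d`. -/
noncomputable def bezier (d : ℕ) (P : Fin (d + 1) → EuclideanSpace ℝ (Fin 2)) (t : ℝ) :
    EuclideanSpace ℝ (Fin 2) :=
  ∑ i : Fin (d + 1), ((d.choose (i : ℕ) : ℝ) * (1 - t) ^ (d - (i : ℕ)) * t ^ (i : ℕ)) • P i

/-- The condition length `lc(P) = ∫₀¹ ‖∂ₜB(P,t)‖ / √|B₁(P,t)² − 4B₂(P,t)| dt`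
of the degree-`d` Bézier curve with control points `P`. -/
noncomputable def conditionLength (d : ℕ) (P : Fin (d + 1) → EuclideanSpace ℝ (Fin 2)) : ℝ :=
  ∫ t in (0:ℝ)..1,
    ‖deriv (bezier d P) t‖ / Real.sqrt |(bezier d P t 0) ^ 2 - 4 * bezier d P t 1|

noncomputable def bcoef (d : ℕ) (i : Fin (d+1)) (t : ℝ) : ℝ :=
  (d.choose (i:ℕ) : ℝ) * (1 - t) ^ (d - (i:ℕ)) * t ^ (i:ℕ)

lemma contDiff_bcoef (d : ℕ) (i : Fin (d+1)) : ContDiff ℝ (⊤:ℕ∞) (bcoef d i) := by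
  unfold bcoef
  exact (contDiff_const.mul ((contDiff_const.sub contDiff_id).pow _)).mul (contDiff_id.pow _)

noncomputable def bcoef' (d : ℕ) (i : Fin (d+1)) : ℝ → ℝ := deriv (bcoef d i)

lemma contDiff_bcoef' (d : ℕ) (i : Fin (d+1)) : ContDiff ℝ (⊤:ℕ∞) (bcoef' d i) :=
  (contDiff_infty_iff_deriv.mp (contDiff_bcoef d i)).2

lemma bezier_eq (d : ℕ) (P : Fin (d+1) → EuclideanSpace ℝ (Fin 2)) (t : ℝ) :
    bezier d P t = ∑ i : Fin (d+1), bcoef d i t • P i := rfl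

lemma bezier_apply (d : ℕ) (P : Fin (d+1) → EuclideanSpace ℝ (Fin 2)) (t : ℝ) (j : Fin 2) :
    bezier d P t j = ∑ i : Fin (d+1), bcoef d i t * P i j := by
  rw [bezier_eq]
  have h1 : (∑ i : Fin (d+1), bcoef d i t • P i) j
      = EuclideanSpace.proj j (∑ i : Fin (d+1), bcoef d i t • P i) := rfl
  rw [h1, map_sum]
  simp [smul_eq_mul]

lemma hasDerivAt_bezier (d : ℕ) (P : Fin (d+1) → EuclideanSpace ℝ (Fin 2)) (t : ℝ) :
    HasDerivAt (bezier d P) (∑ i : Fin (d+1), bcoef' d i t • P i) t := by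
  have : (bezier d P) = fun t => ∑ i : Fin (d+1), bcoef d i t • P i := by
    funext t; exact bezier_eq d P t
  rw [this]
  exact HasDerivAt.fun_sum fun i _ =>
    (((contDiff_infty_iff_deriv.mp (contDiff_bcoef d i)).1 t).hasDerivAt).smul_const (P i)

lemma deriv_bezier (d : ℕ) (P : Fin (d+1) → EuclideanSpace ℝ (Fin 2)) (t : ℝ) :
    deriv (bezier d P) t = ∑ i : Fin (d+1), bcoef' d i t • P i :=
  (hasDerivAt_bezier d P t).deriv

noncomputable def vmap (d : ℕ) (pt : (Fin (d+1) → EuclideanSpace ℝ (Fin 2)) × ℝ) :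
    EuclideanSpace ℝ (Fin 2) :=
  ∑ i : Fin (d+1), bcoef' d i pt.2 • pt.1 i

noncomputable def qmap (d : ℕ) (pt : (Fin (d+1) → EuclideanSpace ℝ (Fin 2)) × ℝ) : ℝ :=
  (∑ i : Fin (d+1), bcoef d i pt.2 * pt.1 i 0) ^ 2
    - 4 * ∑ i : Fin (d+1), bcoef d i pt.2 * pt.1 i 1

lemma contDiff_apply_coord (d : ℕ) (i : Fin (d+1)) (j : Fin 2) :
    ContDiff ℝ (⊤:ℕ∞) (fun pt : (Fin (d+1) → EuclideanSpace ℝ (Fin 2)) × ℝ => pt.1 i j) := by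
  have : (fun pt : (Fin (d+1) → EuclideanSpace ℝ (Fin 2)) × ℝ => pt.1 i j)
      = (EuclideanSpace.proj j).comp ((ContinuousLinearMap.proj i).comp
          (ContinuousLinearMap.fst ℝ _ ℝ)) := rfl
  rw [this]
  exact ContinuousLinearMap.contDiff _

lemma contDiff_apply_pt (d : ℕ) (i : Fin (d+1)) :
    ContDiff ℝ (⊤:ℕ∞) (fun pt : (Fin (d+1) → EuclideanSpace ℝ (Fin 2)) × ℝ => pt.1 i) := by
  have : (fun pt : (Fin (d+1) → EuclideanSpace ℝ (Fin 2)) × ℝ => pt.1 i)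
      = (ContinuousLinearMap.proj i).comp
          (ContinuousLinearMap.fst ℝ _ ℝ) := rfl
  rw [this]
  exact ContinuousLinearMap.contDiff _

lemma contDiff_vmap (d : ℕ) : ContDiff ℝ (⊤:ℕ∞) (vmap d) := by
  unfold vmap
  exact ContDiff.sum fun i _ =>
    ((contDiff_bcoef' d i).comp contDiff_snd).smul (contDiff_apply_pt d i)

lemma contDiff_qmap (d : ℕ) : ContDiff ℝ (⊤:ℕ∞) (qmap d) := by
  unfold qmap
  have hs : ∀ j : Fin 2, ContDiff ℝ (⊤:ℕ∞)
      (fun pt : (Fin (d+1) → EuclideanSpace ℝ (Fin 2)) × ℝ =>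
        ∑ i : Fin (d+1), bcoef d i pt.2 * pt.1 i j) := fun j =>
    ContDiff.sum fun i _ =>
      ((contDiff_bcoef d i).comp contDiff_snd).mul (contDiff_apply_coord d i j)
  exact ((hs 0).pow 2).sub (contDiff_const.mul (hs 1))

noncomputable def Gfun (d : ℕ) (pt : (Fin (d+1) → EuclideanSpace ℝ (Fin 2)) × ℝ) : ℝ :=
  ‖vmap d pt‖ / Real.sqrt |qmap d pt|

lemma contDiffAt_Gfun (d : ℕ) (pt : (Fin (d+1) → EuclideanSpace ℝ (Fin 2)) × ℝ)
    (hv : vmap d pt ≠ 0) (hq : qmap d pt ≠ 0) : ContDiffAt ℝ 1 (Gfun d) pt := by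
  have hnum : ContDiffAt ℝ 1 (fun x => ‖vmap d x‖) pt :=
    ContDiffAt.norm ℝ ((contDiff_vmap d).contDiffAt.of_le (by exact_mod_cast le_top)) hv
  have habs : ContDiffAt ℝ 1 (fun x => |qmap d x|) pt :=
    ContDiffAt.abs ((contDiff_qmap d).contDiffAt.of_le (by exact_mod_cast le_top)) hq
  have hden : ContDiffAt ℝ 1 (fun x => Real.sqrt |qmap d x|) pt :=
    (Real.contDiffAt_sqrt (by simpa using hq)).comp pt habs
  exact hnum.div hden (by positivity)

/-- The condition-length function `lc` is differentiable with respect to the coordinates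
of the control points at every `P` such that, for all `t ∈ [0,1]`, `∂ₜB(P,t) ≠ 0` and
`B₁(P,t)² ≠ 4B₂(P,t)` (the curve stays off the discriminant locus). -/
theorem stmt_5 (d : ℕ) (hd : 1 ≤ d) (P : Fin (d + 1) → EuclideanSpace ℝ (Fin 2))
    (h₁ : ∀ t ∈ Set.Icc (0:ℝ) 1, deriv (bezier d P) t ≠ 0)
    (h₂ : ∀ t ∈ Set.Icc (0:ℝ) 1, (bezier d P t 0) ^ 2 ≠ 4 * bezier d P t 1) :
    DifferentiableAt ℝ (conditionLength d) P := by
  classical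
  have hCL : conditionLength d = fun Q => ∫ t in (0:ℝ)..1, Gfun d (Q, t) := by
    funext Q
    unfold conditionLength Gfun
    congr 1
    funext t
    rw [deriv_bezier, bezier_apply, bezier_apply]
    rfl
  rw [hCL]
  set U : Set ((Fin (d+1) → EuclideanSpace ℝ (Fin 2)) × ℝ) :=
    {pt | vmap d pt ≠ 0 ∧ qmap d pt ≠ 0} with hUdef
  have hUopen : IsOpen U := by
    have h1 : IsOpen {pt : (Fin (d+1) → EuclideanSpace ℝ (Fin 2)) × ℝ | vmap d pt ≠ 0} :=
      isOpen_ne.preimage (contDiff_vmap d).continuous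
    have h2 : IsOpen {pt : (Fin (d+1) → EuclideanSpace ℝ (Fin 2)) × ℝ | qmap d pt ≠ 0} :=
      isOpen_ne.preimage (contDiff_qmap d).continuous
    exact h1.inter h2
  have hPU : ∀ t ∈ Set.Icc (0:ℝ) 1, (P, t) ∈ U := by
    intro t ht
    constructor
    · have := h₁ t ht
      rw [deriv_bezier] at this
      exact this
    · have hb := h₂ t ht
      rw [bezier_apply, bezier_apply] at hb
      exact sub_ne_zero.mpr hb
  -- tube lemma: find ε > 0 with closedBall P ε ×ˢ Icc 0 1 ⊆ U
  have hScomp : IsCompact ({P} ×ˢ Set.Icc (0:ℝ) 1) := isCompact_singleton.prod isCompact_Icc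
  have hSU : ({P} ×ˢ Set.Icc (0:ℝ) 1) ⊆ U := by
    rintro ⟨Q, t⟩ ⟨hQ, ht⟩
    rcases hQ with rfl
    exact hPU t ht
  obtain ⟨δ, hδ, hthick⟩ := hScomp.exists_thickening_subset_open hUopen hSU
  set ε : ℝ := δ / 2 with hεdef
  have hε : 0 < ε := by positivity
  set K : Set ((Fin (d+1) → EuclideanSpace ℝ (Fin 2)) × ℝ) :=
    (Metric.closedBall P ε) ×ˢ Set.Icc (0:ℝ) 1 with hKdef
  have hKU : K ⊆ U := by
    rintro ⟨Q, t⟩ ⟨hQ, ht⟩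
    apply hthick
    rw [Metric.mem_thickening_iff]
    refine ⟨(P, t), ⟨rfl, ht⟩, ?_⟩
    have : dist (Q, t) (P, t) = dist Q P := by
      simp [Prod.dist_eq, dist_nonneg]
    rw [this]
    calc dist Q P ≤ ε := hQ
      _ < δ := by rw [hεdef]; linarith
  have hKcomp : IsCompact K := (isCompact_closedBall P ε).prod isCompact_Icc
  -- smoothness and continuity of the derivative
  have hGU : ContDiffOn ℝ 1 (Gfun d) U := fun pt hpt =>
    (contDiffAt_Gfun d pt hpt.1 hpt.2).contDiffWithinAt
  have hGcont : ContinuousOn (Gfun d) U := hGU.continuousOn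
  have hfd : ContinuousOn (fderiv ℝ (Gfun d)) U :=
    hGU.continuousOn_fderiv_of_isOpen hUopen le_rfl
  obtain ⟨C, hC⟩ := hKcomp.exists_bound_of_continuousOn (hfd.mono hKU)
  set C' : ℝ := max C 0 with hC'def
  -- the partial derivative in P
  set F' : (Fin (d+1) → EuclideanSpace ℝ (Fin 2)) → ℝ →
      ((Fin (d+1) → EuclideanSpace ℝ (Fin 2)) →L[ℝ] ℝ) := fun Q t =>
    (fderiv ℝ (Gfun d) (Q, t)).comp
      (ContinuousLinearMap.inl ℝ (Fin (d+1) → EuclideanSpace ℝ (Fin 2)) ℝ) with hF'def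
  have hmemK : ∀ t ∈ Set.uIoc (0:ℝ) 1, ∀ Q ∈ Metric.ball P ε, (Q, t) ∈ K := by
    intro t ht Q hQ
    rw [Set.uIoc_of_le (zero_le_one)] at ht
    exact ⟨Metric.ball_subset_closedBall hQ, Set.mem_Icc_of_Ioc ht⟩
  have key : HasFDerivAt (fun Q => ∫ t in (0:ℝ)..1, Gfun d (Q, t))
      (∫ t in (0:ℝ)..1, F' P t) P := by
    apply intervalIntegral.hasFDerivAt_integral_of_dominated_of_fderiv_le
      (s := Metric.ball P ε) (hs := Metric.ball_mem_nhds P hε) (bound := fun _ => C')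
    · filter_upwards [Metric.closedBall_mem_nhds P hε] with Q hQ
      apply ContinuousOn.aestronglyMeasurable _ measurableSet_uIoc
      intro t ht
      rw [Set.uIoc_of_le (zero_le_one)] at ht
      have h1 : ContinuousAt (fun t : ℝ => Gfun d (Q, t)) t := by
        have hmem : (Q, t) ∈ U := hKU ⟨hQ, Set.mem_Icc_of_Ioc ht⟩
        have := (contDiffAt_Gfun d (Q, t) hmem.1 hmem.2).continuousAt
        exact this.comp ((Continuous.prodMk continuous_const continuous_id).continuousAt)
      exact h1.continuousWithinAt
    · apply ContinuousOn.intervalIntegrable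
      intro t ht
      rw [Set.uIcc_of_le (zero_le_one)] at ht
      have hmem : (P, t) ∈ U := hPU t ht
      have := (contDiffAt_Gfun d (P, t) hmem.1 hmem.2).continuousAt
      exact (this.comp ((Continuous.prodMk continuous_const continuous_id).continuousAt)).continuousWithinAt
    · apply ContinuousOn.aestronglyMeasurable _ measurableSet_uIoc
      intro t ht
      rw [Set.uIoc_of_le (zero_le_one)] at ht
      have hmem : (P, t) ∈ U := hPU t (Set.mem_Icc_of_Ioc ht)
      have hc : ContinuousAt (fun t : ℝ => fderiv ℝ (Gfun d) (P, t)) t := by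
        have := hfd.continuousAt (hUopen.mem_nhds hmem)
        exact this.comp ((Continuous.prodMk continuous_const continuous_id).continuousAt)
      have hcomp : Continuous fun L : ((Fin (d+1) → EuclideanSpace ℝ (Fin 2)) × ℝ) →L[ℝ] ℝ =>
          L.comp (ContinuousLinearMap.inl ℝ (Fin (d+1) → EuclideanSpace ℝ (Fin 2)) ℝ) := by
        exact ((ContinuousLinearMap.compSL (Fin (d+1) → EuclideanSpace ℝ (Fin 2))
          ((Fin (d+1) → EuclideanSpace ℝ (Fin 2)) × ℝ) ℝ (RingHom.id ℝ) (RingHom.id ℝ)).flip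
          (ContinuousLinearMap.inl ℝ _ ℝ)).continuous
      exact (hcomp.continuousAt.comp hc).continuousWithinAt
    · apply Filter.Eventually.of_forall
      intro t ht Q hQ
      have hmem : (Q, t) ∈ K := hmemK t ht Q hQ
      have hb : ‖fderiv ℝ (Gfun d) (Q, t)‖ ≤ C := hC _ hmem
      apply ContinuousLinearMap.opNorm_le_bound _ (le_max_right C 0)
      intro x
      have h1 : F' Q t x = fderiv ℝ (Gfun d) (Q, t) (x, 0) := rfl
      rw [h1]
      calc ‖fderiv ℝ (Gfun d) (Q, t) (x, 0)‖
          ≤ ‖fderiv ℝ (Gfun d) (Q, t)‖ * ‖(x, (0:ℝ))‖ :=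
            ContinuousLinearMap.le_opNorm _ _
        _ = ‖fderiv ℝ (Gfun d) (Q, t)‖ * ‖x‖ := by
            rw [Prod.norm_def]; simp
        _ ≤ C' * ‖x‖ := by
            apply mul_le_mul_of_nonneg_right _ (norm_nonneg x)
            exact hb.trans (le_max_left C 0)
    · exact intervalIntegrable_const
    · apply Filter.Eventually.of_forall
      intro t ht Q hQ
      have hmem : (Q, t) ∈ U := hKU (hmemK t ht Q hQ)
      have hG : HasFDerivAt (Gfun d) (fderiv ℝ (Gfun d) (Q, t)) (Q, t) :=
        ((contDiffAt_Gfun d (Q, t) hmem.1 hmem.2).differentiableAt one_ne_zero).hasFDerivAt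
      exact hG.comp Q (hasFDerivAt_prodMk_left (𝕜 := ℝ) Q t)
  exact key.differentiableAt
end

section
/- Fix d ≥ 1 and consider the condition-length function lc on tuples of control points P = (P₀,…,P_d) ∈ (ℝ²)^{d+1}, defined by lc(P) = ∫₀¹ ‖∂ₜB(P,t)‖ / √|B₁(P,t)² − 4B₂(P,t)| dt, where B(P,t) = Σᵢ₌₀^d C(d,i)(1−t)^{d−i}tⁱ Pᵢ = (B₁(P,t), B₂(P,t)). Then lc is twice continuously differentiable (of class C²) at every point P such that for all t ∈ [0,1] one has ∂ₜB(P,t) ≠ 0 and B₁(P,t)² ≠ 4B₂(P,t), and at such a point its partial derivative with respect to each coordinate P_{i,j} of a control point is obtained by differentiating under the integral sign: ∂lc/∂P_{i,j}(P) = ∫₀¹ ∂/∂P_{i,j} ( ‖∂ₜB(P,t)‖ / √|B₁(P,t)² − 4B₂(P,t)| ) dt. -/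
/-- The family of control points obtained from `P` by replacing the `j`-th coordinate
`P_{i,j}` of the `i`-th control point by `s`. -/
noncomputable def updateCoord (d : ℕ) (P : Fin (d + 1) → EuclideanSpace ℝ (Fin 2))
    (i : Fin (d + 1)) (j : Fin 2) (s : ℝ) : Fin (d + 1) → EuclideanSpace ℝ (Fin 2) :=
  Function.update P i (WithLp.toLp 2 (Function.update (P i) j s))


open Set Metric MeasureTheory intervalIntegral Function


variable {X : Type*} [NormedAddCommGroup X] [NormedSpace ℝ X]
variable {F : Type*} [NormedAddCommGroup F] [NormedSpace ℝ F] [CompleteSpace F]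

/-- partial fderiv in the first variable -/
noncomputable def pdfst (H : X × ℝ → F) : X × ℝ → (X →L[ℝ] F) :=
  fun p => (fderiv ℝ H p).comp (ContinuousLinearMap.inl ℝ X ℝ)

lemma pdfst_contDiffOn {H : X × ℝ → F} {U : Set (X × ℝ)} (hU : IsOpen U)
    (hH : ContDiffOn ℝ (⊤:ℕ∞) H U) : ContDiffOn ℝ (⊤:ℕ∞) (pdfst H) U :=
  (hH.fderiv_of_isOpen hU (by exact_mod_cast le_refl _)).clm_comp contDiffOn_const

lemma pdfst_spec {H : X × ℝ → F} {U : Set (X × ℝ)} (hU : IsOpen U)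
    (hH : ContDiffOn ℝ (⊤:ℕ∞) H U) :
    ∀ p ∈ U, HasFDerivAt (fun x => H (x, p.2)) (pdfst H p) p.1 := by
  intro p hp
  have h1 : HasFDerivAt H (fderiv ℝ H p) p :=
    ((hH.differentiableOn (by simp)).differentiableAt
      (hU.mem_nhds hp)).hasFDerivAt
  exact h1.comp p.1 (hasFDerivAt_prodMk_left p.1 p.2)

set_option linter.unusedSectionVars false

lemma workhorse [ProperSpace X] {H : X × ℝ → F} {H' : X × ℝ → X →L[ℝ] F} {N : Set X} {W : Set ℝ}
    (hN : IsOpen N) (hW : IsOpen W) (hIcc : Set.Icc (0:ℝ) 1 ⊆ W)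
    (hH : ContinuousOn H (N ×ˢ W)) (hH' : ContinuousOn H' (N ×ˢ W))
    (hd : ∀ p ∈ N ×ˢ W, HasFDerivAt (fun x => H (x, p.2)) (H' p) p.1)
    {x₀ : X} (hx₀ : x₀ ∈ N) :
    HasFDerivAt (fun x => ∫ t in (0:ℝ)..1, H (x, t))
      (∫ t in (0:ℝ)..1, H' (x₀, t)) x₀ := by
  haveI : SecondCountableTopologyEither ℝ (X →L[ℝ] F) := secondCountableTopologyEither_of_left _ _
  haveI : SecondCountableTopologyEither ℝ F := secondCountableTopologyEither_of_left _ _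
  obtain ⟨ε, εpos, hball⟩ : ∃ ε > 0, closedBall x₀ ε ⊆ N :=
    Metric.nhds_basis_closedBall.mem_iff.mp (hN.mem_nhds hx₀)
  have hsub : closedBall x₀ ε ×ˢ Icc (0:ℝ) 1 ⊆ N ×ˢ W := prod_mono hball hIcc
  have hK : IsCompact (closedBall x₀ ε ×ˢ Icc (0:ℝ) 1) :=
    (isCompact_closedBall _ _).prod isCompact_Icc
  obtain ⟨C, hC⟩ := hK.exists_bound_of_continuousOn (hH'.mono hsub)
  have hI : Set.uIoc (0:ℝ) 1 = Set.Ioc 0 1 := uIoc_of_le zero_le_one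
  have hmem : ∀ x ∈ closedBall x₀ ε, ∀ t ∈ Icc (0:ℝ) 1, (x, t) ∈ N ×ˢ W :=
    fun x hx t ht => ⟨hball hx, hIcc ht⟩
  have hcont : ∀ x ∈ closedBall x₀ ε, ContinuousOn (fun t => H (x, t)) (Icc (0:ℝ) 1) :=
    fun x hx => hH.comp (Continuous.continuousOn (by fun_prop)) (fun t ht => hmem x hx t ht)
  have hcont' : ContinuousOn (fun t => H' (x₀, t)) (Icc (0:ℝ) 1) :=
    hH'.comp (Continuous.continuousOn (by fun_prop))
      (fun t ht => hmem x₀ (mem_closedBall_self εpos.le) t ht)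
  apply intervalIntegral.hasFDerivAt_integral_of_dominated_of_fderiv_le
    (F := fun x t => H (x, t)) (F' := fun x t => H' (x, t)) (bound := fun _ => C) (ball_mem_nhds x₀ εpos)
  · filter_upwards [Metric.closedBall_mem_nhds x₀ εpos] with x hx
    rw [hI]
    exact ((hcont x hx).mono Ioc_subset_Icc_self).aestronglyMeasurable measurableSet_Ioc
  · exact ContinuousOn.intervalIntegrable
      (by rw [uIcc_of_le zero_le_one]; exact hcont x₀ (mem_closedBall_self εpos.le))
  · rw [hI]
    exact (hcont'.mono Ioc_subset_Icc_self).aestronglyMeasurable measurableSet_Ioc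
  · apply Filter.Eventually.of_forall
    intro t ht x hx
    exact hC _ ⟨ball_subset_closedBall hx, Ioc_subset_Icc_self (hI ▸ ht)⟩
  · exact intervalIntegrable_const
  · apply Filter.Eventually.of_forall
    intro t ht x hx
    exact hd (x, t) (hmem x (ball_subset_closedBall hx) t (Ioc_subset_Icc_self (hI ▸ ht)))

lemma ladder [ProperSpace X] {G : X × ℝ → F} {N : Set X} {W : Set ℝ}
    (hN : IsOpen N) (hW : IsOpen W) (hIcc : Set.Icc (0:ℝ) 1 ⊆ W)
    (hG : ContDiffOn ℝ (⊤:ℕ∞) G (N ×ˢ W)) :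
    ∀ x ∈ N, HasFDerivAt (fun x => ∫ t in (0:ℝ)..1, G (x, t))
      (∫ t in (0:ℝ)..1, pdfst G (x, t)) x :=
  fun _ hx => workhorse hN hW hIcc hG.continuousOn
    ((pdfst_contDiffOn (hN.prod hW) hG).continuousOn) (pdfst_spec (hN.prod hW) hG) hx

noncomputable abbrev E2 := EuclideanSpace ℝ (Fin 2)

noncomputable def bc (d : ℕ) (i : Fin (d+1)) (t : ℝ) : ℝ :=
  (d.choose (i:ℕ) : ℝ) * (1 - t) ^ (d - (i:ℕ)) * t ^ (i:ℕ)

noncomputable def bc' (d : ℕ) (i : Fin (d+1)) (t : ℝ) : ℝ :=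
  (0 * (1-t)^(d-(i:ℕ)) + (d.choose (i:ℕ) : ℝ) * (((d-(i:ℕ) : ℕ):ℝ) * (1-t)^(d-(i:ℕ)-1) * (-1)))
      * t^(i:ℕ)
    + (d.choose (i:ℕ) : ℝ) * (1-t)^(d-(i:ℕ)) * (((i:ℕ):ℝ) * t^((i:ℕ)-1))

lemma hasDerivAt_bc (d : ℕ) (i : Fin (d+1)) (t : ℝ) :
    HasDerivAt (fun t => bc d i t) (bc' d i t) t := by
  have hu : HasDerivAt (fun t : ℝ => 1 - t) (-1) t := by
    simpa using (hasDerivAt_id t).const_sub 1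
  have h1 : HasDerivAt (fun t : ℝ => (1-t)^(d-(i:ℕ)))
      ((((d-(i:ℕ) : ℕ)):ℝ) * (1-t)^(d-(i:ℕ)-1) * (-1)) t := by
    simpa [mul_assoc, Function.comp_def] using (hasDerivAt_pow (d-(i:ℕ)) (1-t)).comp t hu
  have h2 := hasDerivAt_pow (i:ℕ) t
  exact ((hasDerivAt_const t ((d.choose (i:ℕ) : ℝ))).mul h1).mul h2

noncomputable def bezD (d : ℕ) (Q : Fin (d+1) → E2) (t : ℝ) : E2 :=
  ∑ i : Fin (d+1), bc' d i t • Q i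

lemma hasDerivAt_bezier_s6 (d : ℕ) (Q : Fin (d+1) → E2) (t : ℝ) :
    HasDerivAt (bezier d Q) (bezD d Q t) t := by
  apply HasDerivAt.fun_sum
  intro i _
  exact (hasDerivAt_bc d i t).smul_const (Q i)

lemma deriv_bezier_s6 (d : ℕ) (Q : Fin (d+1) → E2) (t : ℝ) :
    deriv (bezier d Q) t = bezD d Q t := (hasDerivAt_bezier_s6 d Q t).deriv

lemma proj_contDiff (d : ℕ) (i : Fin (d+1)) :
    ContDiff ℝ (⊤:ℕ∞) (fun x : (Fin (d+1) → E2) × ℝ => x.1 i) :=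
  ((ContinuousLinearMap.proj (R := ℝ) (φ := fun _ : Fin (d+1) => E2) i).contDiff).comp
    contDiff_fst

noncomputable def bezJ (d : ℕ) (p : (Fin (d+1) → E2) × ℝ) : E2 :=
  ∑ i : Fin (d+1), bc d i p.2 • p.1 i

noncomputable def bezDJ (d : ℕ) (p : (Fin (d+1) → E2) × ℝ) : E2 :=
  ∑ i : Fin (d+1), bc' d i p.2 • p.1 i

lemma bezJ_eq (d : ℕ) (Q : Fin (d+1) → E2) (t : ℝ) : bezJ d (Q, t) = bezier d Q t := rfl

lemma bezDJ_eq (d : ℕ) (Q : Fin (d+1) → E2) (t : ℝ) : bezDJ d (Q, t) = bezD d Q t := rfl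

lemma contDiff_bc (d : ℕ) (i : Fin (d+1)) : ContDiff ℝ (⊤:ℕ∞) (bc d i) := by
  unfold bc; fun_prop

lemma contDiff_bc' (d : ℕ) (i : Fin (d+1)) : ContDiff ℝ (⊤:ℕ∞) (bc' d i) := by
  unfold bc'; fun_prop

lemma contDiff_bezJ (d : ℕ) : ContDiff ℝ (⊤:ℕ∞) (bezJ d) := by
  apply ContDiff.sum
  intro i _
  exact ((contDiff_bc d i).comp contDiff_snd).smul (proj_contDiff d i)

lemma contDiff_bezDJ (d : ℕ) : ContDiff ℝ (⊤:ℕ∞) (bezDJ d) := by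
  apply ContDiff.sum
  intro i _
  exact ((contDiff_bc' d i).comp contDiff_snd).smul (proj_contDiff d i)

noncomputable def gJ (d : ℕ) (p : (Fin (d+1) → E2) × ℝ) : ℝ :=
  (bezJ d p 0) ^ 2 - 4 * bezJ d p 1

lemma contDiff_gJ (d : ℕ) : ContDiff ℝ (⊤:ℕ∞) (gJ d) := by
  have h0 : ContDiff ℝ (⊤:ℕ∞) (fun p => bezJ d p 0) :=
    ((EuclideanSpace.proj (0 : Fin 2) : E2 →L[ℝ] ℝ).contDiff).comp (contDiff_bezJ d)
  have h1 : ContDiff ℝ (⊤:ℕ∞) (fun p => bezJ d p 1) :=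
    ((EuclideanSpace.proj (1 : Fin 2) : E2 →L[ℝ] ℝ).contDiff).comp (contDiff_bezJ d)
  exact (h0.pow 2).sub (contDiff_const.mul h1)

noncomputable def GJ (d : ℕ) (ε : ℝ) (p : (Fin (d+1) → E2) × ℝ) : ℝ :=
  ‖bezDJ d p‖ / Real.sqrt (ε * gJ d p)

lemma contDiffAt_GJ (d : ℕ) (ε : ℝ) {p : (Fin (d+1) → E2) × ℝ}
    (h1 : bezDJ d p ≠ 0) (h2 : 0 < ε * gJ d p) :
    ContDiffAt ℝ (⊤:ℕ∞) (GJ d ε) p := by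
  have hnum : ContDiffAt ℝ (⊤:ℕ∞) (fun q => ‖bezDJ d q‖) p :=
    ContDiffAt.norm ℝ (contDiff_bezDJ d).contDiffAt h1
  have hden : ContDiffAt ℝ (⊤:ℕ∞) (fun q => Real.sqrt (ε * gJ d q)) p :=
    (Real.contDiffAt_sqrt (ne_of_gt h2)).comp p
      (contDiffAt_const.mul (contDiff_gJ d).contDiffAt)
  exact hnum.div hden (ne_of_gt (Real.sqrt_pos.mpr h2))

lemma updateCoord_eq (d : ℕ) (P : Fin (d + 1) → E2) (i : Fin (d+1)) (j : Fin 2) (s : ℝ) :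
    updateCoord d P i j s
      = P + (s - P i j) • (Pi.single i (EuclideanSpace.single j (1:ℝ)) : Fin (d+1) → E2) := by
  funext k
  simp only [updateCoord, Pi.add_apply, Pi.smul_apply]
  rcases eq_or_ne k i with rfl | hk
  · rw [Function.update_self]
    ext l
    rw [Pi.single_eq_same]
    rcases eq_or_ne l j with rfl | hl
    · simp [Function.update_self, EuclideanSpace.single_apply, PiLp.add_apply, PiLp.smul_apply]
    · simp [Function.update_of_ne hl, EuclideanSpace.single_apply, hl, PiLp.add_apply,
        PiLp.smul_apply]
  · rw [Function.update_of_ne hk, Pi.single_eq_of_ne hk]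
    simp

lemma hasDerivAt_updateCoord (d : ℕ) (P : Fin (d + 1) → E2) (i : Fin (d+1)) (j : Fin 2) (s : ℝ) :
    HasDerivAt (fun s => updateCoord d P i j s)
      (Pi.single i (EuclideanSpace.single j (1:ℝ)) : Fin (d+1) → E2) s := by
  have h : (fun s => updateCoord d P i j s)
      = fun s => P + (s - P i j) • (Pi.single i (EuclideanSpace.single j (1:ℝ)) : Fin (d+1) → E2) :=
    funext (updateCoord_eq d P i j)
  rw [h]
  simpa using
    (((hasDerivAt_id s).sub_const (P i j)).smul_const
      (Pi.single i (EuclideanSpace.single j (1:ℝ)) : Fin (d+1) → E2)).const_add P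

lemma updateCoord_self (d : ℕ) (P : Fin (d + 1) → E2) (i : Fin (d+1)) (j : Fin 2) :
    updateCoord d P i j (P i j) = P := by
  simp [updateCoord]

/-- At every tuple of control points `P` such that for all `t ∈ [0,1]` one has
`∂ₜB(P,t) ≠ 0` and `B₁(P,t)² ≠ 4B₂(P,t)`, the condition-length function `lc` is twice
continuously differentiable in the coordinates of `P`, and its partial derivative with
respect to each coordinate `P_{i,j}` is obtained by differentiating under the
integral sign. -/
theorem stmt_6 (d : ℕ) (hd : 1 ≤ d) (P : Fin (d + 1) → EuclideanSpace ℝ (Fin 2))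
    (h₁ : ∀ t ∈ Set.Icc (0:ℝ) 1, deriv (bezier d P) t ≠ 0)
    (h₂ : ∀ t ∈ Set.Icc (0:ℝ) 1, (bezier d P t 0) ^ 2 ≠ 4 * bezier d P t 1) :
    ContDiffAt ℝ 2 (conditionLength d) P ∧
      ∀ (i : Fin (d + 1)) (j : Fin 2),
        deriv (fun s : ℝ => conditionLength d (updateCoord d P i j s)) (P i j) =
          ∫ t in (0:ℝ)..1,
            deriv
              (fun s : ℝ =>
                ‖deriv (bezier d (updateCoord d P i j s)) t‖ /
                  Real.sqrt
                    |(bezier d (updateCoord d P i j s) t 0) ^ 2 -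
                      4 * bezier d (updateCoord d P i j s) t 1|)
              (P i j) := by
  haveI : ProperSpace (Fin (d+1) → E2) := by infer_instance
  -- the discriminant along `P` has constant sign on `[0,1]`
  have hg0 : ∀ t ∈ Set.Icc (0:ℝ) 1, gJ d (P, t) ≠ 0 := fun t ht => sub_ne_zero.mpr (h₂ t ht)
  have hgcont : Continuous (fun t : ℝ => gJ d (P, t)) :=
    (contDiff_gJ d).continuous.comp (continuous_const.prodMk continuous_id)
  have h0mem : (0:ℝ) ∈ Set.Icc (0:ℝ) 1 := ⟨le_rfl, zero_le_one⟩
  have same_sign : ∀ t ∈ Set.Icc (0:ℝ) 1, 0 < gJ d (P, 0) * gJ d (P, t) := by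
    intro t ht
    by_contra hcon
    push_neg at hcon
    have hne : gJ d (P, 0) * gJ d (P, t) ≠ 0 :=
      mul_ne_zero (hg0 0 h0mem) (hg0 t ht)
    have hlt : gJ d (P, 0) * gJ d (P, t) < 0 := lt_of_le_of_ne hcon hne
    have hsub : Set.uIcc (0:ℝ) t ⊆ Set.Icc (0:ℝ) 1 := by
      rw [uIcc_of_le ht.1]
      exact Icc_subset_Icc le_rfl ht.2
    have h0in : (0:ℝ) ∈ Set.uIcc (gJ d (P, 0)) (gJ d (P, t)) := by
      rcases mul_neg_iff.mp hlt with ⟨hpos, hneg⟩ | ⟨hneg, hpos⟩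
      · exact Set.mem_uIcc.mpr (Or.inr ⟨hneg.le, hpos.le⟩)
      · exact Set.mem_uIcc.mpr (Or.inl ⟨hneg.le, hpos.le⟩)
    obtain ⟨s, hs, hgs⟩ := intermediate_value_uIcc (hgcont.continuousOn) h0in
    exact hg0 s (hsub hs) hgs
  set ε : ℝ := if 0 < gJ d (P, 0) then 1 else -1 with hεdef
  have hεpm : ε = 1 ∨ ε = -1 := by
    rw [hεdef]; split_ifs <;> simp
  have hsign : ∀ t ∈ Set.Icc (0:ℝ) 1, 0 < ε * gJ d (P, t) := by
    intro t ht
    have h := same_sign t ht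
    rw [hεdef]
    split_ifs with hp
    · rcases mul_pos_iff.mp h with ⟨_, h2⟩ | ⟨h1, _⟩
      · linarith
      · linarith
    · have hneg : gJ d (P, 0) < 0 := lt_of_le_of_ne (not_lt.mp hp) (hg0 0 h0mem)
      rcases mul_pos_iff.mp h with ⟨h1, _⟩ | ⟨_, h2⟩
      · linarith
      · linarith
  have habs : ∀ r : ℝ, 0 < ε * r → |r| = ε * r := by
    intro r hr
    rcases hεpm with hε | hε <;> rw [hε] at hr ⊢
    · rw [one_mul] at hr ⊢; exact abs_of_pos hr
    · have : r < 0 := by linarith [hr]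
      rw [abs_of_neg this]; ring
  -- the open tube
  set S : Set ((Fin (d+1) → E2) × ℝ) := {p | bezDJ d p ≠ 0 ∧ 0 < ε * gJ d p} with hSdef
  have hSopen : IsOpen S := by
    apply IsOpen.inter
    · exact isOpen_compl_singleton.preimage (contDiff_bezDJ d).continuous
    · exact isOpen_lt continuous_const (continuous_const.mul (contDiff_gJ d).continuous)
  have htube : ({P} : Set (Fin (d+1) → E2)) ×ˢ Set.Icc (0:ℝ) 1 ⊆ S := by
    rintro ⟨x, t⟩ ⟨hx, ht⟩
    rw [Set.mem_singleton_iff] at hx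
    subst hx
    refine ⟨?_, hsign t ht⟩
    rw [bezDJ_eq, ← deriv_bezier_s6]
    exact h₁ t ht
  obtain ⟨N, W, hNopen, hWopen, hPN, hIccW, hNWS⟩ :=
    generalized_tube_lemma isCompact_singleton isCompact_Icc hSopen htube
  have hP : P ∈ N := hPN rfl
  have hGsm : ContDiffOn ℝ (⊤:ℕ∞) (GJ d ε) (N ×ˢ W) := fun p hp =>
    (contDiffAt_GJ d ε (hNWS hp).1 (hNWS hp).2).contDiffWithinAt
  have hEqInt : ∀ x ∈ N, ∀ t ∈ Set.Icc (0:ℝ) 1,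
      ‖deriv (bezier d x) t‖ / Real.sqrt |(bezier d x t 0) ^ 2 - 4 * bezier d x t 1|
        = GJ d ε (x, t) := by
    intro x hx t ht
    have hmem : (x, t) ∈ S := hNWS ⟨hx, hIccW ht⟩
    unfold GJ
    rw [deriv_bezier_s6, ← bezDJ_eq]
    congr 1
    rw [show (bezier d x t 0) ^ 2 - 4 * bezier d x t 1 = gJ d (x, t) from rfl]
    rw [habs _ hmem.2]
  have hclEq : ∀ x ∈ N, conditionLength d x = ∫ t in (0:ℝ)..1, GJ d ε (x, t) := by
    intro x hx
    unfold conditionLength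
    apply intervalIntegral.integral_congr
    intro t ht
    rw [uIcc_of_le zero_le_one] at ht
    exact hEqInt x hx t ht
  have hev : conditionLength d =ᶠ[nhds P] fun x => ∫ t in (0:ℝ)..1, GJ d ε (x, t) :=
    Filter.eventuallyEq_of_mem (hNopen.mem_nhds hP) hclEq
  have L0 := ladder hNopen hWopen hIccW hGsm
  have L1 := ladder hNopen hWopen hIccW (pdfst_contDiffOn (hNopen.prod hWopen) hGsm)
  have L2 := ladder hNopen hWopen hIccW
    (pdfst_contDiffOn (hNopen.prod hWopen) (pdfst_contDiffOn (hNopen.prod hWopen) hGsm))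
  have part1' : ContDiffAt ℝ 2 (fun x => ∫ t in (0:ℝ)..1, GJ d ε (x, t)) P := by
    rw [show (2 : WithTop ℕ∞) = ((1:ℕ) : WithTop ℕ∞) + 1 by norm_cast]
    rw [contDiffAt_succ_iff_hasFDerivAt]
    refine ⟨_, ⟨N, hNopen.mem_nhds hP, L0⟩, ?_⟩
    rw [show ((1:ℕ) : WithTop ℕ∞) = ((0:ℕ) : WithTop ℕ∞) + 1 by norm_cast]
    rw [contDiffAt_succ_iff_hasFDerivAt]
    refine ⟨_, ⟨N, hNopen.mem_nhds hP, L1⟩, ?_⟩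
    rw [show ((0:ℕ) : WithTop ℕ∞) = 0 by norm_cast]
    exact contDiffAt_zero.mpr
      ⟨N, hNopen.mem_nhds hP, fun x hx =>
        ((L2 x hx).differentiableAt.continuousAt).continuousWithinAt⟩
  refine ⟨part1'.congr_of_eventuallyEq hev, ?_⟩
  intro i j
  set V : Fin (d+1) → E2 := Pi.single i (EuclideanSpace.single j (1:ℝ)) with hVdef
  have hγc : updateCoord d P i j (P i j) = P := updateCoord_self d P i j
  have hγd := hasDerivAt_updateCoord d P i j
  have hγcont : Continuous (fun s => updateCoord d P i j s) := by
    rw [show (fun s => updateCoord d P i j s)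
        = fun s => P + (s - P i j) • V from funext (updateCoord_eq d P i j)]
    fun_prop
  have hmemN : (fun s => updateCoord d P i j s) ⁻¹' N ∈ nhds (P i j) := by
    apply hγcont.continuousAt.preimage_mem_nhds
    rw [hγc]
    exact hNopen.mem_nhds hP
  have hA' : HasFDerivAt (fun x => ∫ t in (0:ℝ)..1, GJ d ε (x, t))
      (∫ t in (0:ℝ)..1, pdfst (GJ d ε) (P, t)) (updateCoord d P i j (P i j)) := by
    rw [hγc]; exact L0 P hP
  have hcomp : HasDerivAt (fun s => ∫ t in (0:ℝ)..1, GJ d ε (updateCoord d P i j s, t))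
      ((∫ t in (0:ℝ)..1, pdfst (GJ d ε) (P, t)) V) (P i j) :=
    hA'.comp_hasDerivAt (P i j) (hγd (P i j))
  have hevc : (fun s => conditionLength d (updateCoord d P i j s)) =ᶠ[nhds (P i j)]
      (fun s => ∫ t in (0:ℝ)..1, GJ d ε (updateCoord d P i j s, t)) := by
    filter_upwards [hmemN] with s hs
    exact hclEq _ hs
  have hL : deriv (fun s => conditionLength d (updateCoord d P i j s)) (P i j)
      = (∫ t in (0:ℝ)..1, pdfst (GJ d ε) (P, t)) V := by
    rw [hevc.deriv_eq]
    exact hcomp.deriv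
  rw [hL]
  have hIntInt : IntervalIntegrable (fun t => pdfst (GJ d ε) (P, t)) volume 0 1 := by
    apply ContinuousOn.intervalIntegrable
    rw [uIcc_of_le zero_le_one]
    exact ((pdfst_contDiffOn (hNopen.prod hWopen) hGsm).continuousOn).comp
      (Continuous.continuousOn (by fun_prop)) (fun t ht => ⟨hP, hIccW ht⟩)
  rw [ContinuousLinearMap.intervalIntegral_apply hIntInt V]
  apply intervalIntegral.integral_congr
  intro t ht
  rw [uIcc_of_le zero_le_one] at ht
  have hfd : HasFDerivAt (fun x => GJ d ε (x, t)) (pdfst (GJ d ε) (P, t))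
      (updateCoord d P i j (P i j)) := by
    rw [hγc]
    exact pdfst_spec (hNopen.prod hWopen) hGsm (P, t) ⟨hP, hIccW ht⟩
  have hDer : HasDerivAt (fun s => GJ d ε (updateCoord d P i j s, t))
      ((pdfst (GJ d ε) (P, t)) V) (P i j) :=
    hfd.comp_hasDerivAt (P i j) (hγd (P i j))
  have hevt : (fun s : ℝ =>
        ‖deriv (bezier d (updateCoord d P i j s)) t‖ /
          Real.sqrt |(bezier d (updateCoord d P i j s) t 0) ^ 2 -
            4 * bezier d (updateCoord d P i j s) t 1|) =ᶠ[nhds (P i j)]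
      (fun s => GJ d ε (updateCoord d P i j s, t)) := by
    filter_upwards [hmemN] with s hs
    exact hEqInt _ hs t ht
  show (pdfst (GJ d ε) (P, t)) V = deriv (fun s : ℝ =>
      ‖deriv (bezier d (updateCoord d P i j s)) t‖ /
        Real.sqrt |(bezier d (updateCoord d P i j s) t 0) ^ 2 -
          4 * bezier d (updateCoord d P i j s) t 1|) (P i j)
  rw [hevt.deriv_eq]
  exact hDer.deriv.symm
end

section
/- Let n ≥ 1 and let a : ℝ → ℂⁿ, t ↦ (a₀(t),…,a_{n−1}(t)), be continuously differentiable, defining the C¹ family of monic polynomials p_t(z) = zⁿ + a_{n−1}(t)z^{n−1} + … + a₁(t)z + a₀(t). Assume that for every t ∈ [0,1] the polynomial p_t is separable (has no repeated complex root), i.e. the path avoids the discriminant locus Σ. Then for every z₀ ∈ ℂ with p₀(z₀) = 0 there exists a unique continuous function z : [0,1] → ℂ with z(0) = z₀ and p_t(z(t)) = 0 for all t ∈ [0,1]; moreover this function z is continuously differentiable and satisfies z′(t) = −(∂p_t/∂t)(z(t)) / p_t′(z(t)). -/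
open Metric Set Filter Topology

section aux
variable {n : ℕ} {a : ℝ → Fin n → ℂ}

lemma aux_ai (ha : ContDiff ℝ 1 a) (i : Fin n) : ContDiff ℝ 1 (fun s => a s i) :=
  (ContinuousLinearMap.proj (R := ℝ) (φ := fun _ : Fin n => ℂ) i).contDiff.comp ha

lemma aux_F (ha : ContDiff ℝ 1 a) :
    ContDiff ℝ 1 (fun q : ℝ × ℂ => q.2 ^ n + ∑ i : Fin n, a q.1 i * q.2 ^ (i:ℕ)) := by
  refine (contDiff_snd.pow n).add (ContDiff.sum fun i _ => ?_)
  exact ((aux_ai ha i).comp contDiff_fst).mul (contDiff_snd.pow _)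

lemma aux_A (ha : ContDiff ℝ 1 a) (t : ℝ) (ζ : ℂ) :
    HasDerivAt (fun s => ζ ^ n + ∑ i : Fin n, a s i * ζ ^ (i:ℕ))
      (∑ i : Fin n, deriv (fun s => a s i) t * ζ ^ (i:ℕ)) t := by
  refine HasDerivAt.const_add _ (HasDerivAt.fun_sum fun i _ => ?_)
  exact (((aux_ai ha i).differentiable one_ne_zero).differentiableAt.hasDerivAt).mul_const _

lemma aux_B (ζ : ℂ) (b : Fin n → ℂ) :
    HasDerivAt (fun w : ℂ => w ^ n + ∑ i : Fin n, b i * w ^ (i:ℕ))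
      ((n:ℂ) * ζ ^ (n-1) + ∑ i : Fin n, b i * ((i:ℕ) * ζ ^ ((i:ℕ)-1))) ζ := by
  refine (hasDerivAt_pow n ζ).add (HasDerivAt.fun_sum fun i _ => ?_)
  exact (hasDerivAt_pow _ ζ).const_mul _

lemma key (ha : ContDiff ℝ 1 a) {p : ℝ → ℂ → ℂ}
    (hp : ∀ t z, p t z = z ^ n + ∑ i : Fin n, a t i * z ^ (i : ℕ))
    {t : ℝ} {ζ : ℂ} (hroot : p t ζ = 0)
    (hB : (n:ℂ) * ζ ^ (n-1) + ∑ i : Fin n, a t i * ((i:ℕ) * ζ ^ ((i:ℕ)-1)) ≠ 0) :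
    ∃ ε > 0, ∃ φ : ℝ → ℂ, φ t = ζ ∧
      (∀ s ∈ ball t ε, p s (φ s) = 0) ∧
      ContinuousOn φ (ball t ε) ∧
      HasDerivAt φ (-((∑ i : Fin n, deriv (fun s => a s i) t * ζ ^ (i:ℕ)) /
        ((n:ℂ) * ζ ^ (n-1) + ∑ i : Fin n, a t i * ((i:ℕ) * ζ ^ ((i:ℕ)-1))))) t ∧
      ∀ s w, s ∈ ball t ε → w ∈ ball ζ ε → p s w = 0 → w = φ s := by
  classical
  set Fq : ℝ × ℂ → ℂ := fun q => q.2 ^ n + ∑ i : Fin n, a q.1 i * q.2 ^ (i:ℕ) with hFqdef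
  have hpF : ∀ s w, p s w = Fq (s, w) := fun s w => hp s w
  set A : ℂ := ∑ i : Fin n, deriv (fun s => a s i) t * ζ ^ (i:ℕ) with hAdef
  set B : ℂ := (n:ℂ) * ζ ^ (n-1) + ∑ i : Fin n, a t i * ((i:ℕ) * ζ ^ ((i:ℕ)-1)) with hBdef
  have hFs : HasStrictFDerivAt Fq (fderiv ℝ Fq (t, ζ)) (t, ζ) :=
    ((aux_F ha).contDiffAt).hasStrictFDerivAt one_ne_zero
  set L : ℝ × ℂ →L[ℝ] ℂ := fderiv ℝ Fq (t, ζ) with hLdef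
  have hLB : ∀ w : ℂ, L (0, w) = w * B := by
    intro w
    have hJ : HasFDerivAt (fun w : ℂ => ((t, w) : ℝ × ℂ))
        ((0 : ℂ →L[ℝ] ℝ).prod (ContinuousLinearMap.id ℝ ℂ)) ζ :=
      (hasFDerivAt_const t ζ).prodMk (hasFDerivAt_id ζ)
    have h1 : HasFDerivAt (fun w : ℂ => Fq (t, w))
        (L.comp ((0 : ℂ →L[ℝ] ℝ).prod (ContinuousLinearMap.id ℝ ℂ))) ζ :=
      hFs.hasFDerivAt.comp ζ hJ
    have h2 : HasDerivAt (fun w : ℂ => Fq (t, w)) B ζ := aux_B ζ (a t)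
    have h2' : HasFDerivAt (fun w : ℂ => Fq (t, w))
        (((1 : ℂ →L[ℂ] ℂ).smulRight B).restrictScalars ℝ) ζ :=
      (h2.hasFDerivAt).restrictScalars ℝ
    have := h1.unique h2'
    have := congrArg (fun (M : ℂ →L[ℝ] ℂ) => M w) this
    simpa [smul_eq_mul] using this
  have hLA : L (1, 0) = A := by
    have hJ : HasFDerivAt (fun s : ℝ => ((s, ζ) : ℝ × ℂ))
        ((ContinuousLinearMap.id ℝ ℝ).prod (0 : ℝ →L[ℝ] ℂ)) t :=
      (hasFDerivAt_id t).prodMk (hasFDerivAt_const ζ t)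
    have h1 : HasFDerivAt (fun s : ℝ => Fq (s, ζ))
        (L.comp ((ContinuousLinearMap.id ℝ ℝ).prod (0 : ℝ →L[ℝ] ℂ))) t :=
      hFs.hasFDerivAt.comp t hJ
    have h2 : HasDerivAt (fun s : ℝ => Fq (s, ζ)) A t := aux_A ha t ζ
    have := h1.unique h2.hasFDerivAt
    have := congrArg (fun (M : ℝ →L[ℝ] ℂ) => M 1) this
    simpa using this
  have hLsw : ∀ (s : ℝ) (w : ℂ), L (s, w) = s • A + w * B := by
    intro s w
    have h : ((s, w) : ℝ × ℂ) = s • ((1:ℝ), (0:ℂ)) + ((0:ℝ), w) := by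
      simp [Prod.ext_iff]
    rw [h, map_add, map_smul, hLA, hLB]
  have left_range : LinearMap.range (L : ℝ × ℂ →ₗ[ℝ] ℂ) = ⊤ := by
    rw [LinearMap.range_eq_top]
    intro c
    exact ⟨(0, c * B⁻¹), by simp [hLsw, mul_assoc, inv_mul_cancel₀ hB]⟩
  have right_range : LinearMap.range (ContinuousLinearMap.fst ℝ ℝ ℂ : ℝ × ℂ →ₗ[ℝ] ℝ) = ⊤ := by
    rw [LinearMap.range_eq_top]
    intro c
    exact ⟨(c, 0), rfl⟩
  have iscompl : IsCompl (LinearMap.ker (L : ℝ × ℂ →ₗ[ℝ] ℂ)) (LinearMap.ker (ContinuousLinearMap.fst ℝ ℝ ℂ : ℝ × ℂ →ₗ[ℝ] ℝ)) := by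
    constructor
    · rw [Submodule.disjoint_def]
      intro v hv1 hv2
      rw [LinearMap.mem_ker] at hv1 hv2
      have h1 : v.1 = 0 := hv2
      have h2 : L (v.1, v.2) = 0 := by rw [Prod.mk.eta]; exact hv1
      rw [hLsw, h1] at h2
      simp only [zero_smul, zero_add] at h2
      have h3 : v.2 = 0 := by
        rcases mul_eq_zero.1 h2 with h | h
        · exact h
        · exact absurd h hB
      exact Prod.ext h1 h3
    · rw [codisjoint_iff, eq_top_iff]
      intro v _
      refine Submodule.mem_sup.2 ⟨(v.1, -(v.1 • A) * B⁻¹), ?_, (0, v.2 + v.1 • A * B⁻¹), ?_, ?_⟩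
      · rw [LinearMap.mem_ker]
        show L (v.1, -(v.1 • A) * B⁻¹) = 0
        rw [hLsw, mul_assoc, inv_mul_cancel₀ hB, mul_one]
        ring
      · rw [LinearMap.mem_ker]; rfl
      · refine Prod.ext (by simp) ?_
        show -(v.1 • A) * B⁻¹ + (v.2 + v.1 • A * B⁻¹) = v.2
        ring
  clear_value L
  clear hLdef hLA hLB
  -- now the implicit function theorem part
  set x : ℝ × ℂ := (t, ζ) with hxdef
  set φdata : ImplicitFunctionData ℝ (ℝ × ℂ) ℂ ℝ :=
    { leftFun := Fq
      leftDeriv := L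
      rightFun := Prod.fst
      rightDeriv := ContinuousLinearMap.fst ℝ ℝ ℂ
      pt := x
      hasStrictFDerivAt_leftFun := hFs
      hasStrictFDerivAt_rightFun := hasStrictFDerivAt_fst
      range_leftDeriv := left_range
      range_rightDeriv := right_range
      isCompl_ker := iscompl } with hφdata
  set e := φdata.toOpenPartialHomeomorph with he
  set ψ := φdata.implicitFunction with hψ
  have hψe : ∀ y s, ψ y s = e.symm (y, s) := fun y s => rfl
  have hx0 : Fq x = 0 := by rw [← hpF]; exact hroot
  have hpt : φdata.prodFun x = ((0 : ℂ), t) := by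
    exact Prod.ext hx0 rfl
  have hψt : ψ 0 t = x := by
    have h := φdata.implicitFunction_apply_image.self_of_nhds
    simpa [hφdata, hx0] using h
  have htend : Tendsto (fun s : ℝ => (((0:ℂ), s) : ℂ × ℝ)) (𝓝 t) (𝓝 (φdata.prodFun φdata.pt)) := by
    have h : φdata.pt = x := rfl
    rw [h, hpt]
    exact (continuous_const.prodMk continuous_id).tendsto t
  have ev1 : ∀ᶠ s in 𝓝 t, Fq (ψ 0 s) = 0 ∧ (ψ 0 s).1 = s := by
    have h := (φdata.leftFun_implicitFunction).and φdata.rightFun_implicitFunction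
    have h2 := htend.eventually h
    simpa [hφdata] using h2
  have h0t : (((0:ℂ), t) : ℂ × ℝ) ∈ e.target := by
    have h := φdata.map_pt_mem_toOpenPartialHomeomorph_target
    have hpt' : (φdata.leftFun φdata.pt, φdata.rightFun φdata.pt) = (((0:ℂ), t) : ℂ × ℝ) := hpt
    rwa [hpt'] at h
  have ev3 : ∀ᶠ s in 𝓝 t, (((0:ℂ), s) : ℂ × ℝ) ∈ e.target := by
    have h : IsOpen {s : ℝ | (((0:ℂ), s) : ℂ × ℝ) ∈ e.target} :=
      e.open_target.preimage (continuous_const.prodMk continuous_id)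
    exact h.mem_nhds h0t
  have ev2 : ∀ s : ℝ, (((0:ℂ), s) : ℂ × ℝ) ∈ e.target → ContinuousAt (fun s' => (ψ 0 s').2) s := by
    intro s hs
    have h1 : ContinuousAt e.symm ((0:ℂ), s) := e.continuousAt_symm hs
    have h2 : ContinuousAt (fun s' : ℝ => (((0:ℂ), s') : ℂ × ℝ)) s :=
      (continuous_const.prodMk continuous_id).continuousAt
    exact continuous_snd.continuousAt.comp (h1.comp h2)
  have hxs : x ∈ e.source := φdata.pt_mem_toOpenPartialHomeomorph_source
  obtain ⟨ε₁, hε₁, hball₁⟩ := Metric.isOpen_iff.1 e.open_source x hxs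
  obtain ⟨ε₂, hε₂, hball₂⟩ := Metric.eventually_nhds_iff_ball.1 (ev1.and ev3)
  refine ⟨min ε₁ ε₂, lt_min hε₁ hε₂, fun s => (ψ 0 s).2, ?_, ?_, ?_, ?_, ?_⟩
  · show (ψ 0 t).2 = ζ
    rw [hψt]
  · intro s hs
    have hs2 : s ∈ ball t ε₂ := ball_subset_ball (min_le_right _ _) hs
    obtain ⟨⟨h1, h2⟩, _⟩ := hball₂ s hs2
    rw [hpF]
    have h3 : ((s : ℝ), (ψ 0 s).2) = ψ 0 s := Prod.ext h2.symm rfl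
    show Fq ((s : ℝ), (ψ 0 s).2) = 0
    rw [h3, h1]
  · intro s hs
    have hs2 : s ∈ ball t ε₂ := ball_subset_ball (min_le_right _ _) hs
    exact (ev2 s (hball₂ s hs2).2).continuousWithinAt
  · set m : ℂ := -(A / B) with hm
    set g'inv : ℝ →L[ℝ] ℝ × ℂ :=
      (ContinuousLinearMap.id ℝ ℝ).prod ((ContinuousLinearMap.id ℝ ℝ).smulRight m) with hg
    have hg1 : φdata.rightDeriv.comp g'inv = ContinuousLinearMap.id ℝ ℝ :=
      ContinuousLinearMap.ext fun s => rfl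
    have hg2 : φdata.leftDeriv.comp g'inv = 0 := by
      refine ContinuousLinearMap.ext fun s => ?_
      show L (s, s • m) = 0
      rw [hLsw]
      have h1 : (s • m) * B = s • (m * B) := smul_mul_assoc s m B
      rw [h1, hm]
      have h2 : -(A / B) * B = -A := by field_simp
      rw [h2]
      simp [smul_eq_mul]
    have hd := φdata.hasStrictFDerivAt_implicitFunction g'inv hg1 hg2
    have hd' : HasStrictFDerivAt (ψ 0) g'inv t := by
      have h1 : φdata.leftFun φdata.pt = 0 := hx0
      have h2 : φdata.rightFun φdata.pt = t := rfl
      rwa [h1, h2] at hd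
    have hsnd : HasFDerivAt (fun s => (ψ 0 s).2)
        ((ContinuousLinearMap.snd ℝ ℝ ℂ).comp g'inv) t :=
      (ContinuousLinearMap.snd ℝ ℝ ℂ).hasFDerivAt.comp t hd'.hasFDerivAt
    have h3 := hsnd.hasDerivAt
    simpa [hg] using h3
  · intro s w hs hw hpw
    have hsw : ((s, w) : ℝ × ℂ) ∈ ball x (min ε₁ ε₂) := by
      rw [← ball_prod_same]
      exact ⟨hs, hw⟩
    have hsw1 : ((s, w) : ℝ × ℂ) ∈ e.source :=
      hball₁ (ball_subset_ball (min_le_left _ _) hsw)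
    have hs2 : s ∈ ball t ε₂ := ball_subset_ball (min_le_right _ _) hs
    have htarget : (((0:ℂ), s) : ℂ × ℝ) ∈ e.target := (hball₂ s hs2).2
    have hm1 : ψ 0 s ∈ e.source := by rw [hψe]; exact e.map_target htarget
    have hFsw : Fq (s, w) = 0 := by rw [← hpF]; exact hpw
    have keyeq : e (s, w) = e (ψ 0 s) := by
      have h1 : e (s, w) = ((0:ℂ), s) := by
        show φdata.prodFun (s, w) = _
        simp [ImplicitFunctionData.prodFun, hφdata, hFsw]
      have h2 : e (ψ 0 s) = ((0:ℂ), s) := by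
        rw [hψe]; exact e.right_inv htarget
      rw [h1, h2]
    have h4 := e.injOn hsw1 hm1 keyeq
    exact congrArg Prod.snd h4

lemma uniq (ha : ContDiff ℝ 1 a) {p : ℝ → ℂ → ℂ}
    (hp : ∀ t z, p t z = z ^ n + ∑ i : Fin n, a t i * z ^ (i : ℕ))
    (hsepB : ∀ t ∈ Icc (0:ℝ) 1, ∀ ζ : ℂ, p t ζ = 0 →
      (n:ℂ) * ζ ^ (n-1) + ∑ i : Fin n, a t i * ((i:ℕ) * ζ ^ ((i:ℕ)-1)) ≠ 0)
    {T : ℝ} (hT : T ∈ Icc (0:ℝ) 1) {z w : ℝ → ℂ}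
    (hzc : ContinuousOn z (Icc 0 T)) (hwc : ContinuousOn w (Icc 0 T))
    (h0 : z 0 = w 0) (hzr : ∀ s ∈ Icc 0 T, p s (z s) = 0)
    (hwr : ∀ s ∈ Icc 0 T, p s (w s) = 0) :
    EqOn z w (Icc 0 T) := by
  by_contra hcon
  simp only [EqOn] at hcon
  push_neg at hcon
  obtain ⟨u, hu, hne⟩ := hcon
  set V : Set ℝ := {s | s ∈ Icc 0 T ∧ z s ≠ w s} with hV
  have hVne : V.Nonempty := ⟨u, hu, hne⟩
  have hVbd : BddBelow V := ⟨0, fun v hv => hv.1.1⟩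
  set τ' := sInf V with hτ'
  have hτ'Icc : τ' ∈ Icc 0 T :=
    (closure_minimal (fun v (hv : v ∈ V) => hv.1) isClosed_Icc) (csInf_mem_closure hVne hVbd)
  have hlow : ∀ s, s ∈ Icc 0 T → s < τ' → z s = w s := by
    intro s hs hlt
    by_contra hne'
    exact absurd (csInf_le hVbd ⟨hs, hne'⟩) (not_le.2 hlt)
  have heqτ : z τ' = w τ' := by
    rcases eq_or_lt_of_le hτ'Icc.1 with h0' | hpos
    · rw [← h0']; exact h0
    · have hsub : Ico 0 τ' ⊆ Icc 0 T := fun s hs => ⟨hs.1, (hs.2.le).trans hτ'Icc.2⟩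
      have hne2 : (𝓝[Ico 0 τ'] τ').NeBot := by
        rw [← mem_closure_iff_nhdsWithin_neBot, closure_Ico hpos.ne]
        exact ⟨hpos.le, le_rfl⟩
      have h1 : Tendsto z (𝓝[Ico 0 τ'] τ') (𝓝 (z τ')) :=
        (hzc τ' hτ'Icc).mono hsub
      have h2 : Tendsto w (𝓝[Ico 0 τ'] τ') (𝓝 (w τ')) :=
        (hwc τ' hτ'Icc).mono hsub
      have heq : z =ᶠ[𝓝[Ico 0 τ'] τ'] w :=
        eventually_mem_nhdsWithin.mono fun s hs => hlow s (hsub hs) hs.2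
      exact tendsto_nhds_unique (h1.congr' heq) h2
  have hτ'1 : τ' ∈ Icc (0:ℝ) 1 := ⟨hτ'Icc.1, hτ'Icc.2.trans hT.2⟩
  obtain ⟨ε, hε, φ, hφt, hφr, hφc, hφd, hφu⟩ :=
    key ha hp (hzr τ' hτ'Icc) (hsepB τ' hτ'1 (z τ') (hzr τ' hτ'Icc))
  have hev : ∀ᶠ s in 𝓝[Icc 0 T] τ',
      s ∈ Icc 0 T ∧ s ∈ ball τ' ε ∧ z s ∈ ball (z τ') ε ∧ w s ∈ ball (z τ') ε := by
    have e1 : ∀ᶠ s in 𝓝[Icc 0 T] τ', s ∈ Icc 0 T := eventually_mem_nhdsWithin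
    have e2 : ∀ᶠ s in 𝓝[Icc 0 T] τ', s ∈ ball τ' ε :=
      nhdsWithin_le_nhds (ball_mem_nhds τ' hε)
    have e3 : ∀ᶠ s in 𝓝[Icc 0 T] τ', z s ∈ ball (z τ') ε :=
      (hzc τ' hτ'Icc) (ball_mem_nhds (z τ') hε)
    have e4 : ∀ᶠ s in 𝓝[Icc 0 T] τ', w s ∈ ball (z τ') ε := by
      have := (hwc τ' hτ'Icc) (ball_mem_nhds (w τ') hε)
      rw [heqτ]
      exact this
    filter_upwards [e1, e2, e3, e4] with s h1 h2 h3 h4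
    exact ⟨h1, h2, h3, h4⟩
  obtain ⟨δ, hδ, hsub⟩ := Metric.mem_nhdsWithin_iff.1 hev
  obtain ⟨v, hvV, hvlt⟩ : ∃ v ∈ V, v < τ' + δ := by
    by_contra hcon2
    push_neg at hcon2
    have : τ' + δ ≤ τ' := le_csInf hVne hcon2
    linarith
  have hvge : τ' ≤ v := csInf_le hVbd hvV
  have hvball : v ∈ ball τ' δ := by
    rw [mem_ball, Real.dist_eq, abs_of_nonneg (by linarith)]
    linarith
  obtain ⟨hvIcc, hvb, hzb, hwb⟩ := hsub ⟨hvball, hvV.1⟩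
  have h1 := hφu v (z v) hvb hzb (hzr v hvIcc)
  have h2 := hφu v (w v) hvb hwb (hwr v hvIcc)
  exact hvV.2 (h1.trans h2.symm)

end aux

/-- Homotopy path-lifting for univariate monic polynomials: if
`p_t(z) = zⁿ + a_{n-1}(t)z^{n-1} + ⋯ + a₀(t)` is a `C¹` family of monic polynomials
(`a : ℝ → ℂⁿ` of class `C¹`) which is separable for every `t ∈ [0,1]`
(no repeated root, i.e. the path avoids the discriminant locus), then every root `z₀`
of `p₀` lifts to a unique continuous path of roots `z : [0,1] → ℂ`, which is moreover
continuously differentiable and satisfies `z′(t) = −(∂p_t/∂t)(z(t)) / p_t′(z(t))`. -/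
theorem stmt_8 (n : ℕ) (hn : 1 ≤ n) (a : ℝ → Fin n → ℂ) (ha : ContDiff ℝ 1 a)
    (p : ℝ → ℂ → ℂ)
    (hp : ∀ t z, p t z = z ^ n + ∑ i : Fin n, a t i * z ^ (i : ℕ))
    (hsep : ∀ t ∈ Set.Icc (0:ℝ) 1, ∀ z : ℂ, p t z = 0 → deriv (p t) z ≠ 0)
    (z₀ : ℂ) (hz₀ : p 0 z₀ = 0) :
    ∃ z : ℝ → ℂ,
      (ContinuousOn z (Set.Icc 0 1) ∧ z 0 = z₀ ∧
        ∀ t ∈ Set.Icc (0:ℝ) 1, p t (z t) = 0) ∧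
      (∀ w : ℝ → ℂ, ContinuousOn w (Set.Icc 0 1) → w 0 = z₀ →
        (∀ t ∈ Set.Icc (0:ℝ) 1, p t (w t) = 0) → Set.EqOn w z (Set.Icc 0 1)) ∧
      ContDiffOn ℝ 1 z (Set.Icc 0 1) ∧
      ∀ t ∈ Set.Icc (0:ℝ) 1,
        derivWithin z (Set.Icc 0 1) t =
          -(deriv (fun s : ℝ => p s (z t)) t) / deriv (p t) (z t) := by
  classical
  obtain ⟨Af, hAf⟩ : ∃ f : ℝ → ℂ → ℂ,
      f = fun t ζ => ∑ i : Fin n, deriv (fun s => a s i) t * ζ ^ (i:ℕ) := ⟨_, rfl⟩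
  obtain ⟨Bf, hBf⟩ : ∃ f : ℝ → ℂ → ℂ,
      f = fun t ζ => (n:ℂ) * ζ ^ (n-1) + ∑ i : Fin n, a t i * ((i:ℕ) * ζ ^ ((i:ℕ)-1)) :=
    ⟨_, rfl⟩
  have hpfun : ∀ t, p t = fun w => w ^ n + ∑ i : Fin n, a t i * w ^ (i:ℕ) :=
    fun t => funext (hp t)
  have hderivB : ∀ t ζ, deriv (p t) ζ = Bf t ζ := by
    intro t ζ; rw [hpfun t]; simp only [hBf]; exact (aux_B ζ (a t)).deriv
  have hderivA : ∀ (t : ℝ) (ζ : ℂ), deriv (fun s => p s ζ) t = Af t ζ := by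
    intro t ζ
    have h : (fun s => p s ζ) = fun s => ζ ^ n + ∑ i : Fin n, a s i * ζ ^ (i:ℕ) :=
      funext fun s => hp s ζ
    rw [h]; simp only [hAf]; exact (aux_A ha t ζ).deriv
  have hsepB : ∀ t ∈ Icc (0:ℝ) 1, ∀ ζ : ℂ, p t ζ = 0 →
      (n:ℂ) * ζ ^ (n-1) + ∑ i : Fin n, a t i * ((i:ℕ) * ζ ^ ((i:ℕ)-1)) ≠ 0 := by
    intro t ht ζ hz
    have h := hsep t ht ζ hz
    rw [hderivB] at h
    simpa only [hBf] using h
  have keyd : ∀ t ∈ Icc (0:ℝ) 1, ∀ ζ : ℂ, p t ζ = 0 →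
      ∃ ε > 0, ∃ φ : ℝ → ℂ, φ t = ζ ∧ (∀ s ∈ Metric.ball t ε, p s (φ s) = 0) ∧
        ContinuousOn φ (Metric.ball t ε) ∧ HasDerivAt φ (-(Af t ζ / Bf t ζ)) t ∧
        ∀ s w, s ∈ Metric.ball t ε → w ∈ Metric.ball ζ ε → p s w = 0 → w = φ s := by
    intro t ht ζ hz
    simpa only [hAf, hBf] using key ha hp hz (hsepB t ht ζ hz)
  -- continuity of coefficient functions
  have hacont : ∀ i : Fin n, Continuous fun s => a s i := fun i => (aux_ai ha i).continuous
  have hacont' : ∀ i : Fin n, Continuous (deriv (fun s => a s i)) :=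
    fun i => (aux_ai ha i).continuous_deriv le_rfl
  have hAfc : Continuous fun q : ℝ × ℂ => Af q.1 q.2 := by
    simp only [hAf]
    apply continuous_finset_sum; intro i _
    exact ((hacont' i).comp continuous_fst).mul (continuous_snd.pow _)
  have hBfc : Continuous fun q : ℝ × ℂ => Bf q.1 q.2 := by
    simp only [hBf]
    refine (continuous_const.mul (continuous_snd.pow _)).add ?_
    apply continuous_finset_sum; intro i _
    exact ((hacont i).comp continuous_fst).mul (continuous_const.mul (continuous_snd.pow _))
  -- the compact set of roots
  set K : Set (ℝ × ℂ) := {q | q.1 ∈ Icc (0:ℝ) 1 ∧ p q.1 q.2 = 0} with hKdef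
  have hFqc : Continuous fun q : ℝ × ℂ => q.2 ^ n + ∑ i : Fin n, a q.1 i * q.2 ^ (i:ℕ) :=
    (aux_F ha).continuous
  have hKclosed : IsClosed K := by
    have h1 : K = (fun q : ℝ × ℂ => q.1) ⁻¹' Icc 0 1 ∩
        (fun q : ℝ × ℂ => q.2 ^ n + ∑ i : Fin n, a q.1 i * q.2 ^ (i:ℕ)) ⁻¹' {0} := by
      ext q; simp [hKdef, hp]
    rw [h1]
    exact (isClosed_Icc.preimage continuous_fst).inter (isClosed_singleton.preimage hFqc)
  obtain ⟨Ca, hCa⟩ := (isCompact_Icc (a := (0:ℝ)) (b := 1)).exists_bound_of_continuousOn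
    (f := fun t => ∑ i : Fin n, ‖a t i‖)
    (Continuous.continuousOn (continuous_finset_sum _ fun i _ => (hacont i).norm))
  have hroot_bd : ∀ q ∈ K, ‖q.2‖ ≤ max 1 Ca := by
    rintro ⟨t, ζ⟩ ⟨ht, hz⟩
    by_contra hbig
    push_neg at hbig
    have h1 : (1:ℝ) < ‖ζ‖ := lt_of_le_of_lt (le_max_left _ _) hbig
    have h2 : Ca < ‖ζ‖ := lt_of_le_of_lt (le_max_right _ _) hbig
    have hz' : ζ ^ n = -∑ i : Fin n, a t i * ζ ^ (i:ℕ) :=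
      eq_neg_of_add_eq_zero_left ((hp t ζ).symm.trans hz)
    have h3 : ‖ζ‖ ^ n ≤ (∑ i : Fin n, ‖a t i‖) * ‖ζ‖ ^ (n-1) := by
      calc ‖ζ‖ ^ n = ‖ζ ^ n‖ := (norm_pow ζ n).symm
        _ = ‖∑ i : Fin n, a t i * ζ ^ (i:ℕ)‖ := by rw [hz', norm_neg]
        _ ≤ ∑ i : Fin n, ‖a t i * ζ ^ (i:ℕ)‖ := norm_sum_le _ _
        _ = ∑ i : Fin n, ‖a t i‖ * ‖ζ‖ ^ (i:ℕ) := by simp [norm_mul, norm_pow]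
        _ ≤ ∑ i : Fin n, ‖a t i‖ * ‖ζ‖ ^ (n-1) := by
            refine Finset.sum_le_sum fun i _ => ?_
            exact mul_le_mul_of_nonneg_left
              (pow_le_pow_right₀ h1.le (Nat.le_pred_of_lt i.isLt)) (norm_nonneg _)
        _ = (∑ i : Fin n, ‖a t i‖) * ‖ζ‖ ^ (n-1) := (Finset.sum_mul _ _ _).symm
    have h4 : (∑ i : Fin n, ‖a t i‖) ≤ Ca :=
      le_trans (le_abs_self _) (hCa t ht)
    have h5 : ‖ζ‖ ^ n < ‖ζ‖ ^ n := by
      have hpow : (0:ℝ) < ‖ζ‖ ^ (n-1) := pow_pos (lt_trans one_pos h1) _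
      calc ‖ζ‖ ^ n ≤ (∑ i : Fin n, ‖a t i‖) * ‖ζ‖ ^ (n-1) := h3
        _ ≤ Ca * ‖ζ‖ ^ (n-1) := mul_le_mul_of_nonneg_right h4 hpow.le
        _ < ‖ζ‖ * ‖ζ‖ ^ (n-1) := by exact mul_lt_mul_of_pos_right h2 hpow
        _ = ‖ζ‖ ^ n := by
            rw [← pow_succ']
            congr 1
            omega
    exact lt_irrefl _ h5
  have hKcpt : IsCompact K := by
    refine ((isCompact_Icc (a := (0:ℝ)) (b := 1)).prod
      (isCompact_closedBall (0:ℂ) (max 1 Ca))).of_isClosed_subset hKclosed ?_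
    rintro ⟨t, ζ⟩ hq
    exact ⟨hq.1, by simpa [mem_closedBall_zero_iff] using hroot_bd _ hq⟩
  have hABK : ContinuousOn (fun q : ℝ × ℂ => -(Af q.1 q.2 / Bf q.1 q.2)) K := by
    refine ContinuousOn.neg (ContinuousOn.div hAfc.continuousOn hBfc.continuousOn ?_)
    rintro ⟨t, ζ⟩ hq
    simp only [hBf]
    exact hsepB t hq.1 ζ hq.2
  obtain ⟨Cd, hCd⟩ := hKcpt.exists_bound_of_continuousOn hABK
  have hCd0 : 0 ≤ Cd := le_trans (norm_nonneg _) (hCd (0, z₀) ⟨⟨le_rfl, zero_le_one⟩, hz₀⟩)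
  -- derivative of any continuous root path
  have hlift_deriv : ∀ T ∈ Icc (0:ℝ) 1, ∀ z : ℝ → ℂ, ContinuousOn z (Icc 0 T) →
      (∀ s ∈ Icc 0 T, p s (z s) = 0) →
      ∀ t ∈ Icc 0 T, HasDerivWithinAt z (-(Af t (z t) / Bf t (z t))) (Icc 0 T) t := by
    intro T hT z hzc hzr t ht
    have ht1 : t ∈ Icc (0:ℝ) 1 := ⟨ht.1, ht.2.trans hT.2⟩
    obtain ⟨ε, hε, φ, hφt, hφr, hφc, hφd, hφu⟩ := keyd t ht1 (z t) (hzr t ht)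
    have h1 : ∀ᶠ s in 𝓝[Icc 0 T] t, z s ∈ Metric.ball (z t) ε :=
      (hzc t ht) (Metric.ball_mem_nhds (z t) hε)
    have h2 : ∀ᶠ s in 𝓝[Icc 0 T] t, s ∈ Metric.ball t ε :=
      nhdsWithin_le_nhds (Metric.ball_mem_nhds t hε)
    have h3 : ∀ᶠ s in 𝓝[Icc 0 T] t, s ∈ Icc 0 T := eventually_mem_nhdsWithin
    have heq : z =ᶠ[𝓝[Icc 0 T] t] φ := by
      filter_upwards [h1, h2, h3] with s hb1 hb2 hb3
      exact hφu s (z s) hb2 hb1 (hzr s hb3)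
    exact (hφd.hasDerivWithinAt).congr_of_eventuallyEq heq hφt.symm
  have hlip : ∀ T ∈ Icc (0:ℝ) 1, ∀ z : ℝ → ℂ, ContinuousOn z (Icc 0 T) →
      (∀ s ∈ Icc 0 T, p s (z s) = 0) →
      ∀ u ∈ Icc 0 T, ∀ v ∈ Icc 0 T, ‖z v - z u‖ ≤ Cd * ‖v - u‖ := by
    intro T hT z hc hr u hu v hv
    exact Convex.norm_image_sub_le_of_norm_hasDerivWithin_le
      (fun x hx => hlift_deriv T hT z hc hr x hx)
      (fun x hx => hCd (x, z x) ⟨⟨hx.1, hx.2.trans hT.2⟩, hr x hx⟩)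
      (convex_Icc 0 T) hu hv
  -- the set of times up to which a lifting exists
  set S : Set ℝ := {T | T ∈ Icc (0:ℝ) 1 ∧ ∃ z : ℝ → ℂ, ContinuousOn z (Icc 0 T) ∧
    z 0 = z₀ ∧ ∀ s ∈ Icc 0 T, p s (z s) = 0} with hSdef
  have h0S : (0:ℝ) ∈ S := by
    refine ⟨⟨le_rfl, zero_le_one⟩, fun _ => z₀, continuousOn_const, rfl, ?_⟩
    intro s hs
    have h : s = 0 := le_antisymm hs.2 hs.1
    rw [h]; exact hz₀
  have hSne : S.Nonempty := ⟨0, h0S⟩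
  have hSbd : BddAbove S := ⟨1, fun T hT => hT.1.2⟩
  have hdown : ∀ T ∈ S, ∀ T', 0 ≤ T' → T' ≤ T → T' ∈ S := by
    rintro T ⟨hT1, z, hzc, hz0, hzr⟩ T' h0' hle
    exact ⟨⟨h0', hle.trans hT1.2⟩, z, hzc.mono (Icc_subset_Icc le_rfl hle), hz0,
      fun s hs => hzr s ⟨hs.1, hs.2.trans hle⟩⟩
  set τ := sSup S with hτdef
  have hτ0 : 0 ≤ τ := le_csSup hSbd h0S
  have hτ1 : τ ≤ 1 := csSup_le hSne fun T hT => hT.1.2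
  have hlt : ∀ t, 0 ≤ t → t < τ → t ∈ S := by
    intro t h0t hlt
    obtain ⟨T, hTS, hTt⟩ := exists_lt_of_lt_csSup hSne hlt
    exact hdown T hTS t h0t hTt.le
  have hτS : τ ∈ S := by
    rcases eq_or_lt_of_le hτ0 with heq | hpos
    · rw [← heq]; exact h0S
    · set Z : ℝ → ℂ := fun t => if h : t ∈ S then Classical.choose h.2 t else 0 with hZdef
      have hZeq : ∀ T ∈ S, ∀ z : ℝ → ℂ, ContinuousOn z (Icc 0 T) → z 0 = z₀ →
          (∀ s ∈ Icc 0 T, p s (z s) = 0) → ∀ t ∈ Icc 0 T, Z t = z t := by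
        intro T hTS z hzc hz0 hzr t ht
        have htS : t ∈ S := hdown T hTS t ht.1 ht.2
        have hspec := Classical.choose_spec htS.2
        have hZt : Z t = Classical.choose htS.2 t := by
          rw [hZdef]; exact dif_pos htS
        rw [hZt]
        exact uniq ha hp hsepB htS.1 hspec.1
          (hzc.mono (Icc_subset_Icc le_rfl ht.2))
          (by rw [hspec.2.1, hz0]) hspec.2.2
          (fun s hs => hzr s ⟨hs.1, hs.2.trans ht.2⟩) ⟨ht.1, le_rfl⟩
      have hZgood : ∀ T ∈ S, ContinuousOn Z (Icc 0 T) ∧ Z 0 = z₀ ∧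
          ∀ s ∈ Icc 0 T, p s (Z s) = 0 := by
        intro T hTS
        obtain ⟨hT1, zT, h1, h2, h3⟩ := id hTS
        have hEq : EqOn Z zT (Icc 0 T) := fun t ht => hZeq T hTS zT h1 h2 h3 t ht
        refine ⟨h1.congr hEq, ?_, fun s hs => by rw [hEq hs]; exact h3 s hs⟩
        rw [hZeq T hTS zT h1 h2 h3 0 ⟨le_rfl, hT1.1⟩, h2]
      have hZlip : ∀ u ∈ Ico 0 τ, ∀ v ∈ Ico 0 τ, ‖Z v - Z u‖ ≤ Cd * ‖v - u‖ := by
        intro u hu v hv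
        have hTS : max u v ∈ S := hlt (max u v) (le_max_of_le_left hu.1) (max_lt hu.2 hv.2)
        obtain ⟨hc, h0, hr⟩ := hZgood (max u v) hTS
        exact hlip (max u v) hTS.1 Z hc hr u ⟨hu.1, le_max_left _ _⟩ v ⟨hv.1, le_max_right _ _⟩
      set u : ℕ → ℝ := fun k => τ - τ / (k + 1) with hu
      have hdivpos : ∀ k : ℕ, 0 < τ / ((k:ℝ) + 1) :=
        fun k => div_pos hpos (by positivity)
      have hdivle : ∀ k : ℕ, τ / ((k:ℝ) + 1) ≤ τ := by
        intro k
        rw [div_le_iff₀ (by positivity)]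
        nlinarith [Nat.cast_nonneg (α := ℝ) k]
      have hdivmono : ∀ N k : ℕ, N ≤ k → τ / ((k:ℝ) + 1) ≤ τ / ((N:ℝ) + 1) := by
        intro N k hNk
        apply div_le_div_of_nonneg_left hτ0 (by positivity)
        have : (N:ℝ) ≤ (k:ℝ) := Nat.cast_le.2 hNk
        linarith
      have huIco : ∀ k, u k ∈ Ico 0 τ := by
        intro k
        constructor
        · simp only [hu]; linarith [hdivle k]
        · simp only [hu]; linarith [hdivpos k]
      have hdivtend : Tendsto (fun k : ℕ => τ / ((k:ℝ) + 1)) atTop (𝓝 0) := by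
        have h := tendsto_const_div_atTop_nhds_zero_nat τ
        have h2 := h.comp (tendsto_add_atTop_nat 1)
        refine Filter.Tendsto.congr (fun k => ?_) h2
        simp only [Function.comp]
        push_cast
        ring
      have hcauchy : CauchySeq (fun k => Z (u k)) := by
        refine cauchySeq_of_le_tendsto_0 (fun N => Cd * (τ / ((N:ℝ)+1))) ?_ ?_
        · intro m k N hm hk
          have h1 : ‖Z (u m) - Z (u k)‖ ≤ Cd * ‖u m - u k‖ :=
            hZlip (u k) (huIco k) (u m) (huIco m)
          have h2 : ‖u m - u k‖ ≤ τ / ((N:ℝ)+1) := by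
            have e1 : u m - u k = τ / ((k:ℝ)+1) - τ / ((m:ℝ)+1) := by
              simp only [hu]; ring
            rw [e1, Real.norm_eq_abs, abs_sub_le_iff]
            constructor
            · linarith [hdivmono N k hk, (hdivpos m).le]
            · linarith [hdivmono N m hm, (hdivpos k).le]
          calc dist (Z (u m)) (Z (u k)) = ‖Z (u m) - Z (u k)‖ := dist_eq_norm _ _
            _ ≤ Cd * ‖u m - u k‖ := h1
            _ ≤ Cd * (τ / ((N:ℝ)+1)) := mul_le_mul_of_nonneg_left h2 hCd0
        · simpa using hdivtend.const_mul Cd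
      obtain ⟨Lv, hLv⟩ := cauchySeq_tendsto_of_complete hcauchy
      have hutend : Tendsto u atTop (𝓝 τ) := by
        have h2 := Filter.Tendsto.sub
          (tendsto_const_nhds : Tendsto (fun _ : ℕ => τ) atTop (𝓝 τ)) hdivtend
        simpa [hu] using h2
      have hdistL : ∀ t ∈ Ico 0 τ, dist (Z t) Lv ≤ Cd * (τ - t) := by
        intro t ht
        have hev2 : ∀ᶠ k in atTop, t < u k := hutend.eventually (eventually_gt_nhds ht.2)
        have hev : ∀ᶠ k in atTop, dist (Z t) (Z (u k)) ≤ Cd * (τ - t) := by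
          filter_upwards [hev2] with k hk
          have h1 : ‖Z (u k) - Z t‖ ≤ Cd * ‖u k - t‖ := hZlip t ht (u k) (huIco k)
          rw [dist_eq_norm, norm_sub_rev]
          refine h1.trans ?_
          have h3 : ‖u k - t‖ ≤ τ - t := by
            rw [Real.norm_eq_abs, abs_of_pos (by linarith)]
            have h4 := (huIco k).2
            linarith
          exact mul_le_mul_of_nonneg_left h3 hCd0
        have htd : Tendsto (fun k => dist (Z t) (Z (u k))) atTop (𝓝 (dist (Z t) Lv)) :=
          tendsto_const_nhds.dist hLv
        exact le_of_tendsto htd hev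
      have hZtend : Tendsto Z (𝓝[Ico 0 τ] τ) (𝓝 Lv) := by
        rw [tendsto_iff_dist_tendsto_zero]
        refine squeeze_zero' (Eventually.of_forall fun t => dist_nonneg)
          (eventually_mem_nhdsWithin.mono fun t ht => hdistL t ht) ?_
        have h1 : Tendsto (fun t : ℝ => Cd * (τ - t)) (𝓝 τ) (𝓝 (Cd * (τ - τ))) :=
          (tendsto_const_nhds.sub tendsto_id).const_mul Cd
        have h2 := h1.mono_left (nhdsWithin_le_nhds (s := Ico 0 τ))
        simpa using h2
      set zτ : ℝ → ℂ := fun t => if t < τ then Z t else Lv with hzτ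
      have hzτIco : ∀ t ∈ Ico 0 τ, zτ t = Z t := fun t ht => if_pos ht.2
      have hzτauτ : zτ τ = Lv := if_neg (lt_irrefl τ)
      refine ⟨⟨hτ0, hτ1⟩, zτ, ?_, ?_, ?_⟩
      · intro t ht
        rcases lt_or_eq_of_le ht.2 with hlt' | heq'
        · obtain ⟨T, hTτ, hTlt⟩ := exists_between hlt'
          have hTS : T ∈ S := hlt T (le_trans ht.1 hTτ.le) hTlt
          obtain ⟨hc, -, -⟩ := hZgood T hTS
          have h1 : ContinuousWithinAt Z (Icc 0 T) t := hc t ⟨ht.1, hTτ.le⟩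
          have h2 : Icc 0 T ∈ 𝓝[Icc 0 τ] t := by
            refine mem_nhdsWithin.2 ⟨Iio T, isOpen_Iio, hTτ, ?_⟩
            rintro s ⟨hs1, hs2⟩
            exact ⟨hs2.1, le_of_lt hs1⟩
          have h3 : ContinuousWithinAt Z (Icc 0 τ) t := h1.mono_of_mem_nhdsWithin h2
          refine h3.congr_of_eventuallyEq ?_ (hzτIco t ⟨ht.1, hlt'⟩)
          have h4 : Iio τ ∈ 𝓝[Icc 0 τ] t := nhdsWithin_le_nhds (Iio_mem_nhds hlt')
          filter_upwards [h4] with s hs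
          exact if_pos hs
        · subst heq'
          have hIcc : Icc (0:ℝ) τ = insert τ (Ico 0 τ) := (Ico_insert_right hτ0).symm
          have hgoal : Tendsto zτ (𝓝[Icc 0 τ] τ) (𝓝 (zτ τ)) := by
            rw [hIcc, nhdsWithin_insert, hzτauτ, tendsto_sup]
            constructor
            · simpa [hzτauτ] using tendsto_pure_nhds zτ τ
            · exact hZtend.congr'
                (eventually_mem_nhdsWithin.mono fun s hs => (hzτIco s hs).symm)
          exact hgoal
      · show (if (0:ℝ) < τ then Z 0 else Lv) = z₀
        rw [if_pos hpos]
        exact (hZgood 0 h0S).2.1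
      · intro s hs
        rcases lt_or_eq_of_le hs.2 with hlt' | heq'
        · show p s (if s < τ then Z s else Lv) = 0
          rw [if_pos hlt']
          have hsS : s ∈ S := hlt s hs.1 hlt'
          exact (hZgood s hsS).2.2 s ⟨hs.1, le_rfl⟩
        · subst heq'
          show p τ (if τ < τ then Z τ else Lv) = 0
          rw [if_neg (lt_irrefl τ)]
          have hne2 : (𝓝[Ico 0 τ] τ).NeBot := by
            rw [← mem_closure_iff_nhdsWithin_neBot, closure_Ico hpos.ne]
            exact ⟨hτ0, le_rfl⟩
          have h1 : Tendsto (fun t => ((t, Z t) : ℝ × ℂ)) (𝓝[Ico 0 τ] τ) (𝓝 (τ, Lv)) :=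
            Tendsto.prodMk_nhds (tendsto_id'.2 nhdsWithin_le_nhds) hZtend
          have h2 : Tendsto (fun t => p t (Z t)) (𝓝[Ico 0 τ] τ) (𝓝 (p τ Lv)) := by
            have h3 := (hFqc.tendsto ((τ : ℝ), Lv)).comp h1
            have h4 : (fun t => p t (Z t)) =
                (fun q : ℝ × ℂ => q.2 ^ n + ∑ i : Fin n, a q.1 i * q.2 ^ (i:ℕ)) ∘
                  (fun t => ((t, Z t) : ℝ × ℂ)) :=
              funext fun t => hp t (Z t)
            have h5 : p τ Lv = (τ, Lv).2 ^ n + ∑ i : Fin n, a (τ, Lv).1 i * (τ, Lv).2 ^ (i:ℕ) :=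
              hp τ Lv
            rw [h4, h5]
            exact h3
          have hzero2 : (fun t => p t (Z t)) =ᶠ[𝓝[Ico 0 τ] τ] (fun _ => (0:ℂ)) :=
            eventually_mem_nhdsWithin.mono fun t ht =>
              (hZgood t (hlt t ht.1 ht.2)).2.2 t ⟨ht.1, le_rfl⟩
          exact tendsto_nhds_unique (h2.congr' hzero2) tendsto_const_nhds
  have hτeq1 : τ = 1 := by
    by_contra hne
    have hτlt : τ < 1 := lt_of_le_of_ne hτ1 hne
    obtain ⟨_, z, hzc, hz0, hzr⟩ := hτS
    obtain ⟨ε, hε, φ, hφt, hφr, hφc, hφd, hφu⟩ :=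
      keyd τ ⟨hτ0, hτ1⟩ (z τ) (hzr τ ⟨hτ0, le_rfl⟩)
    set T' := min 1 (τ + ε/2) with hT'
    have hτT' : τ < T' := lt_min hτlt (by linarith)
    have hT'le : T' ≤ τ + ε/2 := min_le_right _ _
    have hT'mem : T' ∈ Icc (0:ℝ) 1 := ⟨le_trans hτ0 hτT'.le, min_le_left _ _⟩
    have hT'S : T' ∈ S := by
      refine ⟨hT'mem, fun t => if t ≤ τ then z t else φ t, ?_, ?_, ?_⟩
      · refine ContinuousOn.if ?_ ?_ ?_
        · intro s hs
          have h : s = τ := by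
            have h2 := hs.2
            rw [show {a : ℝ | a ≤ τ} = Iic τ from rfl, frontier_Iic] at h2
            exact h2
          rw [h, hφt]
        · have hsub : Icc 0 T' ∩ closure {a : ℝ | a ≤ τ} ⊆ Icc 0 τ := by
            intro s hs
            rw [show {a : ℝ | a ≤ τ} = Iic τ from rfl, closure_Iic] at hs
            exact ⟨hs.1.1, hs.2⟩
          exact hzc.mono hsub
        · have hsub : Icc 0 T' ∩ closure {a : ℝ | ¬ a ≤ τ} ⊆ Metric.ball τ ε := by
            intro s hs
            have h1 : τ ≤ s := by
              have h2 := hs.2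
              rw [show {a : ℝ | ¬ a ≤ τ} = Ioi τ from by ext b; simp [not_le], closure_Ioi] at h2
              exact h2
            have h2 : s ≤ τ + ε/2 := hs.1.2.trans hT'le
            rw [Metric.mem_ball, Real.dist_eq, abs_of_nonneg (by linarith)]
            linarith
          exact hφc.mono hsub
      · show (if (0:ℝ) ≤ τ then z 0 else φ 0) = z₀
        rw [if_pos hτ0]; exact hz0
      · intro s hs
        show p s (if s ≤ τ then z s else φ s) = 0
        by_cases hcase : s ≤ τ
        · rw [if_pos hcase]; exact hzr s ⟨hs.1, hcase⟩
        · rw [if_neg hcase]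
          push_neg at hcase
          refine hφr s ?_
          have h2 : s ≤ τ + ε/2 := hs.2.trans hT'le
          rw [Metric.mem_ball, Real.dist_eq, abs_of_nonneg (by linarith)]
          linarith
    exact absurd (le_csSup hSbd hT'S) (not_le.2 hτT')
  obtain ⟨_, z, hzc, hz0, hzr⟩ := hτS
  rw [hτeq1] at hzc hzr
  have hud : UniqueDiffOn ℝ (Icc (0:ℝ) 1) := uniqueDiffOn_Icc zero_lt_one
  have hdiff : ∀ t ∈ Icc (0:ℝ) 1, HasDerivWithinAt z (-(Af t (z t) / Bf t (z t))) (Icc 0 1) t :=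
    fun t ht => hlift_deriv 1 ⟨zero_le_one, le_rfl⟩ z hzc hzr t ht
  have hderivwithin : ∀ t ∈ Icc (0:ℝ) 1,
      derivWithin z (Icc 0 1) t = -(Af t (z t) / Bf t (z t)) :=
    fun t ht => (hdiff t ht).derivWithin (hud t ht)
  refine ⟨z, ⟨hzc, hz0, hzr⟩, ?_, ?_, ?_⟩
  · intro w hwc hw0 hwr
    exact uniq ha hp hsepB ⟨zero_le_one, le_rfl⟩ hwc hzc (hw0.trans hz0.symm) hwr hzr
  · have hc2 : ContinuousOn (fun t => -(Af t (z t) / Bf t (z t))) (Icc (0:ℝ) 1) := by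
      have hzc2 : ContinuousOn (fun t => ((t, z t) : ℝ × ℂ)) (Icc (0:ℝ) 1) :=
        continuousOn_id.prodMk hzc
      refine ContinuousOn.neg (ContinuousOn.div ?_ ?_ ?_)
      · exact hAfc.comp_continuousOn hzc2
      · exact hBfc.comp_continuousOn hzc2
      · intro t ht
        simp only [hBf]
        exact hsepB t ht (z t) (hzr t ht)
    have h1 := (contDiffOn_succ_iff_derivWithin (n := 0) hud (f := z)).2
      ⟨fun t ht => (hdiff t ht).differentiableWithinAt, by simp,
       (contDiffOn_zero).2 (hc2.congr fun t ht => hderivwithin t ht)⟩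
    simpa using h1
  · intro t ht
    rw [hderivwithin t ht, hderivA t (z t), hderivB t (z t), neg_div]
end
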